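/- Let F be a non-meager filter on ω extending the Fréchet filter and define G = {A ⊆ ω × ω : for every n < ω, the vertical section {x : (n,x) ∈ A} belongs to F}. Then G is a non-meager subset of 2^(ω×ω). -/

import Mathlib

open Set

/-- A point of the Cantor space `α → Bool`, viewed as a subset of `α`
(the identification of `2^ω` with `𝒫(ω)` via characteristic functions). -/
def toSet {α : Type*} (x : α → Bool) : Set α := {a | x a = true}

/-- The copy of a family `F ⊆ 𝒫(α)` inside the Cantor space `α → Bool`. -/
def cantorCopy {α : Type*} (F : Set (Set α)) : Set (α → Bool) := toSet ⁻¹' F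

/-- `F` is a filter on `α`: contains the whole set, not `∅`, closed under
finite intersections and supersets. -/
def IsFilterOn {α : Type*} (F : Set (Set α)) : Prop :=
  Set.univ ∈ F ∧ ∅ ∉ F ∧ (∀ A B : Set α, A ∈ F → B ∈ F → A ∩ B ∈ F) ∧
    ∀ A B : Set α, A ∈ F → A ⊆ B → B ∈ F

/-- `F` extends the Fréchet filter: every cofinite set belongs to `F`. -/
def ExtendsFrechet {α : Type*} (F : Set (Set α)) : Prop :=
  ∀ A : Set α, Aᶜ.Finite → A ∈ F

/-- `F` is a P-filter: every countable subfamily has a pseudo-intersection in `F`. -/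
def IsPFilterOn {α : Type*} (F : Set (Set α)) : Prop :=
  ∀ X : ℕ → Set α, (∀ n, X n ∈ F) → ∃ Y ∈ F, ∀ n, (Y \ X n).Finite

/-- `F` is non-meager as a subset of the Cantor space `α → Bool`. -/
def NonMeagerFamily {α : Type*} (F : Set (Set α)) : Prop :=
  ¬ IsMeagre (cantorCopy F)

/-- `I` is an ideal on `α`: contains `∅`, not the whole set, closed under
finite unions and subsets. -/
def IsIdealOn {α : Type*} (I : Set (Set α)) : Prop :=
  ∅ ∈ I ∧ Set.univ ∉ I ∧ (∀ A B : Set α, A ∈ I → B ∈ I → A ∪ B ∈ I) ∧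
    ∀ A B : Set α, A ∈ I → B ⊆ A → B ∈ I

/-- `I` contains all finite sets. -/
def ContainsFinites {α : Type*} (I : Set (Set α)) : Prop :=
  ∀ A : Set α, A.Finite → A ∈ I

/-- `I` is a P-ideal: every countable subfamily has a member of `I`
almost containing each of them. -/
def IsPIdealOn {α : Type*} (I : Set (Set α)) : Prop :=
  ∀ X : ℕ → Set α, (∀ n, X n ∈ I) → ∃ Y ∈ I, ∀ n, (X n \ Y).Finite

/-- A topological space is countable dense homogeneous. -/
def CDH (X : Type*) [TopologicalSpace X] : Prop :=
  ∀ D E : Set X, D.Countable → Dense D → E.Countable → Dense E →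
    ∃ h : X ≃ₜ X, h '' D = E

/-- `D` is a (set-theoretic) subfamily of `F` that is dense in `F` with respect to
the subspace topology `F` inherits from the Cantor space. -/
def DenseIn {α : Type*} (D F : Set (Set α)) : Prop :=
  D ⊆ F ∧ cantorCopy F ⊆ closure (cantorCopy D)

/-- Basic open neighborhoods in a product of discrete spaces. -/
lemma nbhd_basicX {α : Type*} {U : Set (α → Bool)} (hU : IsOpen U) {x : α → Bool}
    (hx : x ∈ U) : ∃ I : Finset α, ∀ y : α → Bool, (∀ i ∈ I, y i = x i) → y ∈ U := by
  obtain ⟨I, u, h1, h2⟩ := isOpen_pi_iff.mp hU x hx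
  exact ⟨I, fun y hy => h2 fun a ha => (hy a ha) ▸ (h1 a ha).2⟩

lemma closed_union_nwd {X : Type*} [TopologicalSpace X] {s t : Set X}
    (hs : IsClosed s) (ht : IsClosed t) (hs' : IsNowhereDense s) (ht' : IsNowhereDense t) :
    IsNowhereDense (s ∪ t) := by
  rw [(hs.union ht).isNowhereDense_iff]
  rw [hs.isNowhereDense_iff] at hs'
  rw [ht.isNowhereDense_iff] at ht'
  by_contra h
  obtain ⟨x, hx⟩ := nonempty_iff_ne_empty.mpr h
  by_cases hxs : ∃ y, y ∈ interior (s ∪ t) \ s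
  · obtain ⟨y, hy1, hy2⟩ := hxs
    have : y ∈ interior t := by
      have hopen : IsOpen (interior (s ∪ t) \ s) := isOpen_interior.sdiff hs
      have hsub : interior (s ∪ t) \ s ⊆ t := fun z hz =>
        (interior_subset hz.1).resolve_left hz.2
      exact interior_maximal hsub hopen ⟨hy1, hy2⟩
    simp [ht'] at this
  · push_neg at hxs
    have : interior (s ∪ t) ⊆ s := fun z hz => by
      by_contra hzs; exact hxs z ⟨hz, hzs⟩
    have : x ∈ interior s := interior_maximal this isOpen_interior hx
    simp [hs'] at this

/-- Decompose a meagre set into an increasing countable union of closed nowhere dense sets. -/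
lemma meagre_decomp {X : Type*} [TopologicalSpace X] {s : Set X} (h : IsMeagre s) :
    ∃ C : ℕ → Set X, (∀ n, IsClosed (C n)) ∧ (∀ n, IsNowhereDense (C n)) ∧
      Monotone C ∧ s ⊆ ⋃ n, C n := by
  obtain ⟨S, hnwd, hcnt, hsub⟩ := isMeagre_iff_countable_union_isNowhereDense.mp h
  obtain ⟨f, hf⟩ := (Set.Countable.insert ∅ hcnt).exists_eq_range (insert_nonempty _ _)
  have hfn : ∀ n, IsNowhereDense (f n) := by
    intro n
    have : f n ∈ insert ∅ S := hf ▸ mem_range_self n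
    rcases this with h' | h'
    · simp [h']
    · exact hnwd _ h'
  refine ⟨fun n => ⋃ i ∈ Finset.range (n+1), closure (f i), ?_, ?_, ?_, ?_⟩
  · intro n
    exact (Finset.range (n+1)).finite_toSet.isClosed_biUnion fun i _ => isClosed_closure
  · intro n
    induction n with
    | zero => simpa using (hfn 0).closure
    | succ k ih =>
        show IsNowhereDense (⋃ i ∈ Finset.range (k+1+1), closure (f i))
        have : (⋃ i ∈ Finset.range (k+1+1), closure (f i)) =
            (⋃ i ∈ Finset.range (k+1), closure (f i)) ∪ closure (f (k+1)) := by
          rw [Finset.range_add_one]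
          simp [Set.biUnion_insert, Set.union_comm]
        rw [this]
        exact closed_union_nwd
          ((Finset.range (k+1)).finite_toSet.isClosed_biUnion fun i _ => isClosed_closure)
          isClosed_closure ih (hfn (k+1)).closure
  · intro a b hab
    apply Set.biUnion_subset_biUnion_left
    intro i hi
    have : i < a + 1 := Finset.mem_range.mp hi
    exact Finset.mem_range.mpr (by omega)
  · intro x hx
    obtain ⟨u, huS, hxu⟩ := hsub hx
    have : u ∈ range f := hf ▸ mem_insert_of_mem _ huS
    obtain ⟨i, rfl⟩ := this
    exact mem_iUnion.mpr ⟨i, mem_biUnion (Finset.mem_coe.mpr (Finset.self_mem_range_succ i)) (subset_closure hxu)⟩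

/-- Preimage of a meagre set under a homeomorphism is meagre. -/
lemma meagre_preimage {X Y : Type*} [TopologicalSpace X] [TopologicalSpace Y]
    (φ : X ≃ₜ Y) {s : Set Y} (h : IsMeagre s) : IsMeagre (φ ⁻¹' s) := by
  obtain ⟨S, hnwd, hcnt, hsub⟩ := isMeagre_iff_countable_union_isNowhereDense.mp h
  refine isMeagre_iff_countable_union_isNowhereDense.mpr
    ⟨(fun t => φ ⁻¹' t) '' S, ?_, hcnt.image _, ?_⟩
  · rintro t ⟨u, huS, rfl⟩
    have := hnwd u huS
    rw [IsNowhereDense] at this ⊢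
    rw [← φ.preimage_closure, ← φ.preimage_interior, this, preimage_empty]
  · intro x hx
    obtain ⟨u, huS, hxu⟩ := hsub hx
    exact ⟨φ ⁻¹' u, mem_image_of_mem _ huS, hxu⟩

/-- For a closed set in Cantor space, non-membership is witnessed on an initial segment. -/
lemma closed_cyl {C : Set (ℕ → Bool)} (hC : IsClosed C) {x : ℕ → Bool} (hx : x ∉ C) :
    ∃ N : ℕ, ∀ y : ℕ → Bool, (∀ i < N, y i = x i) → y ∉ C := by
  obtain ⟨I, hI⟩ := nbhd_basicX hC.isOpen_compl hx
  refine ⟨I.sup id + 1, fun y hy => hI y fun i hi => hy i ?_⟩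
  exact Nat.lt_succ_of_le (Finset.le_sup (f := id) hi)

lemma cyl_isOpen (N : ℕ) (σ : ℕ → Bool) : IsOpen {y : ℕ → Bool | ∀ i < N, y i = σ i} := by
  have : {y : ℕ → Bool | ∀ i < N, y i = σ i} =
      ⋂ i ∈ Finset.range N, {y : ℕ → Bool | y i = σ i} := by
    ext y; simp [Finset.mem_range]
  rw [this]
  refine isOpen_biInter_finset fun i _ => ?_
  have : {y : ℕ → Bool | y i = σ i} = (fun y : ℕ → Bool => y i) ⁻¹' {σ i} := rfl
  rw [this]
  exact (continuous_apply i).isOpen_preimage _ (isOpen_discrete _)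

/-- One-step extension avoiding a closed nowhere dense set. -/
lemma nwd_avoid {C : Set (ℕ → Bool)} (hC : IsClosed C) (hnwd : IsNowhereDense C)
    (σ : ℕ → Bool) (N : ℕ) :
    ∃ N' : ℕ, N < N' ∧ ∃ x : ℕ → Bool, (∀ i < N, x i = σ i) ∧
      ∀ y : ℕ → Bool, (∀ i < N', y i = x i) → y ∉ C := by
  have hint : interior C = ∅ := hC.isNowhereDense_iff.mp hnwd
  have hns : ¬ ({y : ℕ → Bool | ∀ i < N, y i = σ i} ⊆ C) := by
    intro hsub
    have : σ ∈ interior C :=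
      interior_maximal hsub (cyl_isOpen N σ) (fun i _ => rfl)
    simp [hint] at this
  obtain ⟨x, hx1, hx2⟩ := not_subset.mp hns
  obtain ⟨N₀, hN₀⟩ := closed_cyl hC hx2
  exact ⟨max N₀ (N+1), by omega, x, hx1,
    fun y hy => hN₀ y fun i hi => hy i (lt_of_lt_of_le hi (le_max_left _ _))⟩

lemma list_avoid {C : Set (ℕ → Bool)} (hC : IsClosed C) (hnwd : IsNowhereDense C)
    (L : List (ℕ → Bool)) (N : ℕ) :
    ∃ N' : ℕ, N < N' ∧ ∃ t : ℕ → Bool, ∀ p ∈ L, ∀ y : ℕ → Bool,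
      (∀ i < N, y i = p i) → (∀ i, N ≤ i → i < N' → y i = t i) → y ∉ C := by
  induction L with
  | nil => exact ⟨N + 1, by omega, fun _ => false, by simp⟩
  | cons p L ih =>
      obtain ⟨N₁, hN₁, t₁, ht₁⟩ := ih
      obtain ⟨N₂, hN₂, x, hx1, hx2⟩ :=
        nwd_avoid hC hnwd (fun i => if i < N then p i else t₁ i) N₁
      refine ⟨N₂, by omega, x, ?_⟩
      intro q hq y hy1 hy2
      rcases List.mem_cons.mp hq with rfl | hqL
      · refine hx2 y fun i hi => ?_
        by_cases h : i < N
        · rw [hy1 i h, hx1 i (by omega)]; simp [h]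
        · exact hy2 i (by omega) hi
      · refine ht₁ q hqL y hy1 fun i hNi hiN₁ => ?_
        rw [hy2 i hNi (by omega), hx1 i (by omega)]
        simp [Nat.not_lt.mpr hNi]

/-- Uniform avoidance: extend on an interval so that no continuation lies in `C`,
whatever happens below `N`. -/
lemma avoid {C : Set (ℕ → Bool)} (hC : IsClosed C) (hnwd : IsNowhereDense C) (N : ℕ) :
    ∃ N' : ℕ, N < N' ∧ ∃ t : ℕ → Bool, ∀ y : ℕ → Bool,
      (∀ i, N ≤ i → i < N' → y i = t i) → y ∉ C := by
  classical
  set L : List (ℕ → Bool) := (Finset.univ : Finset (Fin N → Bool)).toList.map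
    (fun f : Fin N → Bool => fun i : ℕ => if h : i < N then f ⟨i, h⟩ else false) with hL
  obtain ⟨N', hN', t, ht⟩ := list_avoid hC hnwd L N
  refine ⟨N', hN', t, fun y hy => ?_⟩
  set p : ℕ → Bool := fun i : ℕ => if h : i < N then y i else false with hp
  have hpL : p ∈ L := by
    rw [hL]
    refine List.mem_map.mpr ⟨fun i : Fin N => y i, Finset.mem_toList.mpr (Finset.mem_univ _), ?_⟩
    funext i
    by_cases h : i < N <;> simp [hp, h]
  exact ht p hpL y (fun i hi => by simp [hp, hi]) hy

/-- Easy direction: a family all of whose members meet cofinitely many sets from a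
disjoint sequence of finite sets is meagre. -/
lemma easyDir {F : Set (Set ℕ)} (M : ℕ → Set ℕ) (hfin : ∀ r, (M r).Finite)
    (hdisj : ∀ r s, r ≠ s → Disjoint (M r) (M s))
    (hmeet : ∀ X ∈ F, ∃ j, ∀ r, j ≤ r → (X ∩ M r).Nonempty) :
    IsMeagre (cantorCopy F) := by
  classical
  set D : ℕ → Set (ℕ → Bool) :=
    fun j => ⋂ (r : ℕ) (_ : j ≤ r), {x : ℕ → Bool | ∃ i ∈ M r, x i = true} with hD
  have hDmem : ∀ j x, x ∈ D j ↔ ∀ r, j ≤ r → ∃ i ∈ M r, x i = true := by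
    intro j x; simp [hD]
  have hDclosed : ∀ j, IsClosed (D j) := by
    intro j
    refine isClosed_iInter fun r => isClosed_iInter fun _ => ?_
    have : {x : ℕ → Bool | ∃ i ∈ M r, x i = true} =
        ⋃ i ∈ M r, (fun x : ℕ → Bool => x i) ⁻¹' {true} := by
      ext x; simp
    rw [this]
    exact (hfin r).isClosed_biUnion fun i _ =>
      (isClosed_discrete _).preimage (continuous_apply i)
  have hDnwd : ∀ j, IsNowhereDense (D j) := by
    intro j
    rw [(hDclosed j).isNowhereDense_iff]
    by_contra h
    obtain ⟨x, hx⟩ := nonempty_iff_ne_empty.mpr h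
    obtain ⟨I, hI⟩ := nbhd_basicX isOpen_interior hx
    -- only finitely many M r meet I
    have hfinidx : {r : ℕ | (M r ∩ (I : Set ℕ)).Nonempty}.Finite := by
      have hpt : ∀ r ∈ {r : ℕ | (M r ∩ (I : Set ℕ)).Nonempty},
          ∃ i, i ∈ M r ∩ (I : Set ℕ) := fun r hr => hr
      choose pt hpt using hpt
      apply Set.Finite.of_finite_image (f := fun r => if h : _ then pt r h else 0)
      · apply I.finite_toSet.subset
        rintro i ⟨r, hr, rfl⟩
        simp only [dif_pos hr]
        exact (hpt r hr).2
      · intro r hr s hs he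
        simp only [dif_pos hr, dif_pos hs] at he
        by_contra hne
        exact ((hdisj r s hne).ne_of_mem (hpt r hr).1 (hpt s hs).1) he
    obtain ⟨B, hB⟩ := hfinidx.bddAbove
    set r := max j (B + 1) with hr
    have hrI : ∀ i ∈ M r, i ∉ (I : Set ℕ) := by
      intro i hi hiI
      have : r ∈ {r : ℕ | (M r ∩ (I : Set ℕ)).Nonempty} := ⟨i, hi, hiI⟩
      have := hB this
      omega
    set y : ℕ → Bool := fun i => if i ∈ M r then false else x i with hy
    have hyD : y ∈ D j := interior_subset (hI y fun i hiI => by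
      simp only [hy]
      rw [if_neg (fun h => hrI i h hiI)])
    obtain ⟨i, hiM, hit⟩ := (hDmem j y).mp hyD r (le_max_left _ _)
    simp only [hy, if_pos hiM] at hit
    exact Bool.false_ne_true hit
  refine isMeagre_iff_countable_union_isNowhereDense.mpr ⟨range D, ?_, countable_range D, ?_⟩
  · rintro t ⟨j, rfl⟩; exact hDnwd j
  · intro x hx
    obtain ⟨j, hj⟩ := hmeet (toSet x) hx
    refine ⟨D j, mem_range_self j, (hDmem j x).mpr fun r hr => ?_⟩
    obtain ⟨i, hiX, hiM⟩ := hj r hr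
    exact ⟨i, hiM, hiX⟩

/-- Hard direction: a meagre superset-closed family admits an interval sequence
each of whose members is eventually met. -/
lemma hardDir {H : Set (Set ℕ)} (hup : ∀ A B : Set ℕ, A ∈ H → A ⊆ B → B ∈ H)
    (hm : IsMeagre (cantorCopy H)) :
    ∃ m : ℕ → ℕ, m 0 = 0 ∧ StrictMono m ∧
      ∀ X ∈ H, ∃ j, ∀ k, j ≤ k → ∃ i ∈ X, m k ≤ i ∧ i < m (k + 1) := by
  classical
  obtain ⟨C, hCc, hCnwd, hCmono, hCcov⟩ := meagre_decomp hm
  have key : ∀ k N, ∃ N' : ℕ, N < N' ∧ ∃ t : ℕ → Bool,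
      ∀ y : ℕ → Bool, (∀ i, N ≤ i → i < N' → y i = t i) → y ∉ C k :=
    fun k N => avoid (hCc k) (hCnwd k) N
  choose! Nf hNf tf htf using key
  set m : ℕ → ℕ := fun k => Nat.rec 0 (fun k prev => Nf k prev) k with hm'
  have hm0 : m 0 = 0 := rfl
  have hmsucc : ∀ k, m (k + 1) = Nf k (m k) := fun k => rfl
  have hmono : StrictMono m := strictMono_nat_of_lt_succ fun k => by
    rw [hmsucc]; exact hNf k (m k)
  -- global bit sequence
  have hex : ∀ i, ∃ k, i < m (k + 1) := fun i =>
    ⟨i, lt_of_lt_of_le (Nat.lt_succ_self i) (hmono.le_apply)⟩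
  set kk : ℕ → ℕ := fun i => Nat.find (hex i) with hkk
  have hkk_uniq : ∀ i k, m k ≤ i → i < m (k + 1) → kk i = k := by
    intro i k h1 h2
    have hle : kk i ≤ k := Nat.find_le h2
    rcases Nat.lt_or_ge (kk i) k with hlt | hge
    · have ha : i < m (kk i + 1) := Nat.find_spec (hex i)
      have hb : m (kk i + 1) ≤ m k := hmono.monotone (Nat.succ_le_of_lt hlt)
      omega
    · omega
  set tg : ℕ → Bool := fun i => tf (kk i) (m (kk i)) i with htg
  refine ⟨m, hm0, hmono, ?_⟩
  intro X hX
  set T : Set ℕ := {i | tg i = true} with hT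
  have hZ : X ∪ T ∈ H := hup X _ hX subset_union_left
  set x : ℕ → Bool := fun i => if i ∈ X ∪ T then true else false with hx
  have hxset : toSet x = X ∪ T := by
    ext i
    simp only [toSet, hx, mem_setOf_eq]
    by_cases h : i ∈ X ∪ T <;> simp [h]
  have hxmem : x ∈ cantorCopy H := by
    simp only [cantorCopy, mem_preimage, hxset]; exact hZ
  obtain ⟨j, hj⟩ := mem_iUnion.mp (hCcov hxmem)
  refine ⟨j, fun k hk => ?_⟩
  have hxCk : x ∈ C k := hCmono hk hj
  have := htf k (m k)
  have hne : ¬ ∀ i, m k ≤ i → i < m (k + 1) → x i = tf k (m k) i := by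
    intro hall
    exact (this x hall) hxCk
  push_neg at hne
  obtain ⟨i, hi1, hi2, hi3⟩ := hne
  have htgi : tg i = tf k (m k) i := by
    show tf (kk i) (m (kk i)) i = tf k (m k) i
    rw [hkk_uniq i k hi1 hi2]
  refine ⟨i, ?_, hi1, hi2⟩
  by_cases hb : tf k (m k) i = true
  · -- then i ∈ T so x i = true = t, contradiction
    have hiT : i ∈ T := by rw [hT, mem_setOf_eq, htgi]; exact hb
    have : x i = true := by rw [hx]; simp [mem_union, hiT]
    rw [this, hb] at hi3
    exact absurd rfl hi3
  · have hb' : tf k (m k) i = false := by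
      cases h : tf k (m k) i
      · rfl
      · exact absurd h hb
    have hxi : x i = true := by
      cases h : x i
      · rw [h, hb'] at hi3; exact absurd rfl hi3
      · rfl
    have hiXT : i ∈ X ∪ T := by
      by_contra h
      rw [hx] at hxi
      simp [h] at hxi
    rcases hiXT with h | h
    · exact h
    · have : tg i = true := h
      rw [htgi, hb'] at this
      exact absurd this (by simp)

/-- Every natural number lies in some interval `[m k, m (k+1))`. -/
lemma interval_cover {m : ℕ → ℕ} (h0 : m 0 = 0) (hmono : StrictMono m) (i : ℕ) :
    ∃ k, m k ≤ i ∧ i < m (k + 1) := by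
  have hex : ∃ k, i < m (k + 1) :=
    ⟨i, lt_of_lt_of_le (Nat.lt_succ_self i) hmono.le_apply⟩
  refine ⟨Nat.find hex, ?_, Nat.find_spec hex⟩
  rcases Nat.eq_zero_or_pos (Nat.find hex) with h | h
  · rw [h, h0]; exact Nat.zero_le i
  · have := Nat.find_min hex (Nat.sub_lt h Nat.one_pos)
    have heq : Nat.find hex - 1 + 1 = Nat.find hex := by omega
    rw [heq] at this
    omega

lemma finite_bound {s : Set ℕ} (hs : s.Finite) : ∃ B, ∀ n ∈ s, n < B := by
  obtain ⟨B, hB⟩ := hs.bddAbove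
  exact ⟨B + 1, fun n hn => Nat.lt_succ_of_le (hB hn)⟩


/-- If `F` is a non-meager filter on `ω` extending the Fréchet filter, then the family
`G` of all `A ⊆ ω × ω` all of whose vertical sections belong to `F` is non-meager
in `2^(ω×ω)`. -/
theorem stmt9 (F : Set (Set ℕ)) (hF : IsFilterOn F) (hFr : ExtendsFrechet F)
    (hNM : NonMeagerFamily F) :
    NonMeagerFamily {A : Set (ℕ × ℕ) | ∀ n : ℕ, {x : ℕ | (n, x) ∈ A} ∈ F} := by
  classical
  set G : Set (Set (ℕ × ℕ)) := {A : Set (ℕ × ℕ) | ∀ n : ℕ, {x : ℕ | (n, x) ∈ A} ∈ F} with hG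
  intro hmG
  apply hNM
  obtain ⟨_, _, hFinter, hFup⟩ := hF
  -- G is upward closed
  have hGup : ∀ A B : Set (ℕ × ℕ), A ∈ G → A ⊆ B → B ∈ G := by
    intro A B hA hAB n
    exact hFup _ _ (hA n) fun x hx => hAB hx
  set e : ℕ ≃ ℕ × ℕ := (Denumerable.eqv (ℕ × ℕ)).symm with he
  set φ : (ℕ → Bool) ≃ₜ ((ℕ × ℕ) → Bool) :=
    { toFun := fun x p => x (e.symm p)
      invFun := fun y n => y (e n)
      left_inv := fun x => funext fun n => by simp
      right_inv := fun y => funext fun p => by simp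
      continuous_toFun := continuous_pi fun p => continuous_apply (e.symm p)
      continuous_invFun := continuous_pi fun n => continuous_apply (e n) } with hφ
  set H : Set (Set ℕ) := {Y : Set ℕ | e '' Y ∈ G} with hH
  have hHup : ∀ A B : Set ℕ, A ∈ H → A ⊆ B → B ∈ H := by
    intro A B hA hAB
    exact hGup _ _ hA (image_mono (f := e) hAB)
  have hHcopy : cantorCopy H = φ ⁻¹' (cantorCopy G) := by
    ext x
    have himg : e '' toSet x = toSet (φ x) := by
      ext p
      constructor
      · rintro ⟨n, hn, rfl⟩
        show x (e.symm (e n)) = true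
        rw [Equiv.symm_apply_apply]; exact hn
      · intro hp
        exact ⟨e.symm p, hp, Equiv.apply_symm_apply e p⟩
    simp only [cantorCopy, mem_preimage, hH, mem_setOf_eq, himg]
  have hmH : IsMeagre (cantorCopy H) := by
    rw [hHcopy]; exact meagre_preimage φ hmG
  obtain ⟨m, hm0, hmono, hmeet⟩ := hardDir hHup hmH
  -- The partition of ℕ × ℕ into finite pieces
  set K : ℕ → Set (ℕ × ℕ) := fun k => e '' {i | m k ≤ i ∧ i < m (k + 1)} with hK
  have hKfin : ∀ k, (K k).Finite :=
    fun k => ((Set.finite_Iio (m (k + 1))).subset fun i hi => hi.2).image e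
  have hKdisj : ∀ r s, r ≠ s → Disjoint (K r) (K s) := by
    intro r s hrs
    rw [Set.disjoint_left]
    rintro p ⟨i, hi, rfl⟩ ⟨i', hi', hee⟩
    have : i' = i := e.injective hee
    subst this
    simp only [mem_setOf_eq] at hi hi'
    rcases Nat.lt_or_ge r s with h | h
    · have hle : m (r + 1) ≤ m s := hmono.monotone (show r + 1 ≤ s by omega)
      omega
    · have hle : m (s + 1) ≤ m r := hmono.monotone (show s + 1 ≤ r by omega)
      omega
  have hKcov : ∀ p : ℕ × ℕ, ∃ k, p ∈ K k := by
    intro p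
    obtain ⟨k, h1, h2⟩ := interval_cover hm0 hmono (e.symm p)
    exact ⟨k, e.symm p, ⟨h1, h2⟩, Equiv.apply_symm_apply e p⟩
  have hmeetK : ∀ A ∈ G, ∃ j, ∀ k, j ≤ k → (A ∩ K k).Nonempty := by
    intro A hA
    have hY : e ⁻¹' A ∈ H := by
      show e '' (e ⁻¹' A) ∈ G
      rw [Set.image_preimage_eq A e.surjective]; exact hA
    obtain ⟨j, hj⟩ := hmeet _ hY
    refine ⟨j, fun k hk => ?_⟩
    obtain ⟨i, hiY, hi1, hi2⟩ := hj k hk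
    exact ⟨e i, hiY, i, ⟨hi1, hi2⟩, rfl⟩
  -- squares
  set sq : ℕ → Set (ℕ × ℕ) := fun N => {p : ℕ × ℕ | p.1 < N ∧ p.2 < N} with hsq
  have hsqfin : ∀ N, (sq N).Finite := fun N =>
    ((Set.finite_Iio N).prod (Set.finite_Iio N)).subset fun p hp => ⟨hp.1, hp.2⟩
  have hstep : ∀ N, ∃ N', N < N' ∧ ∀ k, (K k ∩ sq N).Nonempty → K k ⊆ sq N' := by
    intro N
    have hidx : {k | (K k ∩ sq N).Nonempty}.Finite := by
      have hpt : ∀ k ∈ {k | (K k ∩ sq N).Nonempty}, ∃ p, p ∈ K k ∩ sq N := fun k hk => hk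
      choose pt hpt using hpt
      apply Set.Finite.of_finite_image (f := fun k => if h : _ then pt k h else (0, 0))
      · apply (hsqfin N).subset
        rintro p ⟨k, hk, rfl⟩
        simp only [dif_pos hk]
        exact (hpt k hk).2
      · intro r hr s hs hrs
        simp only [dif_pos hr, dif_pos hs] at hrs
        by_contra hne
        exact (hKdisj r s hne).ne_of_mem (hpt r hr).1 (hrs ▸ (hpt s hs).1) rfl
    have hU : (⋃ k ∈ {k | (K k ∩ sq N).Nonempty}, K k).Finite :=
      Set.Finite.biUnion hidx fun k _ => hKfin k
    obtain ⟨B1, hB1⟩ := finite_bound (hU.image Prod.fst)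
    obtain ⟨B2, hB2⟩ := finite_bound (hU.image Prod.snd)
    refine ⟨max (N + 1) (max B1 B2), by omega, fun k hk p hp => ?_⟩
    have hpU : p ∈ ⋃ k ∈ {k | (K k ∩ sq N).Nonempty}, K k :=
      mem_biUnion hk hp
    constructor
    · have := hB1 p.1 (mem_image_of_mem _ hpU)
      omega
    · have := hB2 p.2 (mem_image_of_mem _ hpU)
      omega
  choose! ds hds1 hds2 using hstep
  set d : ℕ → ℕ := fun j => Nat.rec 0 (fun _ prev => ds prev) j with hd
  have hdsucc : ∀ j, d (j + 1) = ds (d j) := fun j => rfl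
  have hdmono : StrictMono d := strictMono_nat_of_lt_succ fun j => by
    rw [hdsucc]; exact hds1 (d j)
  have hd0 : d 0 = 0 := rfl
  have hPd : ∀ j k, (K k ∩ sq (d j)).Nonempty → K k ⊆ sq (d (j + 1)) := by
    intro j k hk
    rw [hdsucc]; exact hds2 (d j) k hk
  -- the index of the piece containing (0, d j)
  have hidxex : ∀ j, ∃ k, ((0 : ℕ), d j) ∈ K k := fun j => hKcov _
  choose idx hidx using hidxex
  have hidxfib : ∀ k, {j | idx j = k}.Finite := by
    intro k
    apply Set.Finite.of_finite_image (f := fun j => ((0 : ℕ), d j))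
    · apply (hKfin k).subset
      rintro p ⟨j, hj, rfl⟩
      exact hj ▸ hidx j
    · intro r _ s _ hrs
      exact hdmono.injective (congrArg Prod.snd hrs)
  -- Now show F is meagre
  set M : ℕ → Set ℕ := fun r => {b | d (3 * r) ≤ b ∧ b < d (3 * r + 3)} with hM
  have hMfin : ∀ r, (M r).Finite := fun r =>
    (Set.finite_Iio (d (3 * r + 3))).subset fun b hb => hb.2
  have hMdisj : ∀ r s, r ≠ s → Disjoint (M r) (M s) := by
    intro r s hrs
    rw [Set.disjoint_left]
    rintro b ⟨h1, h2⟩ ⟨h3, h4⟩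
    rcases Nat.lt_or_ge r s with h | h
    · have hle : d (3 * r + 3) ≤ d (3 * s) := hdmono.monotone (show 3 * r + 3 ≤ 3 * s by omega)
      omega
    · have hle : d (3 * s + 3) ≤ d (3 * r) := hdmono.monotone (show 3 * s + 3 ≤ 3 * r by omega)
      omega
  refine easyDir M hMfin hMdisj ?_
  intro X hX
  -- the witnessing element of G
  set A : Set (ℕ × ℕ) := {p : ℕ × ℕ | p.2 ∈ X ∧ p.1 < p.2} with hA
  have hAG : A ∈ G := by
    intro n
    have : {x : ℕ | (n, x) ∈ A} = X ∩ {x : ℕ | n < x} := by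
      ext x; simp [hA, and_comm]
    rw [this]
    refine hFinter _ _ hX (hFr _ ?_)
    apply (Set.finite_Iic n).subset
    intro x hx
    simp only [mem_compl_iff, mem_setOf_eq, not_lt] at hx
    exact hx
  obtain ⟨j0, hj0⟩ := hmeetK A hAG
  -- idx is eventually ≥ j0
  have hsmall : {j | idx j < j0}.Finite := by
    apply Set.Finite.subset (Set.Finite.biUnion (Finset.range j0).finite_toSet
      (fun k _ => hidxfib k))
    intro j hj
    exact mem_biUnion (Finset.mem_coe.mpr (Finset.mem_range.mpr hj)) rfl
  obtain ⟨j1, hj1⟩ := finite_bound hsmall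
  have claim : ∀ j : ℕ, j1 ≤ j + 1 → ∃ b ∈ X, d j ≤ b ∧ b < d (j + 3) := by
    intro j hj
    set k := idx (j + 1) with hk'
    have hkj0 : j0 ≤ k := by
      by_contra h
      have hmem : (j + 1) ∈ {j | idx j < j0} := Nat.lt_of_not_le h
      have := hj1 (j + 1) hmem
      omega
    obtain ⟨⟨a, b⟩, hpA, hpK⟩ := hj0 k hkj0
    -- locate K k between squares
    have hkex : ∃ t, (K k ∩ sq (d (t + 1))).Nonempty := by
      refine ⟨j + 1, ((0 : ℕ), d (j + 1)), hidx (j + 1), ?_⟩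
      constructor
      · show (0 : ℕ) < d (j + 1 + 1)
        calc (0:ℕ) = d 0 := hd0.symm
        _ < d (j + 1 + 1) := hdmono (show 0 < j + 1 + 1 by omega)
      · exact hdmono (show j + 1 < j + 1 + 1 by omega)
    set j' := Nat.find hkex with hj'
    have hj'spec : (K k ∩ sq (d (j' + 1))).Nonempty := Nat.find_spec hkex
    have hj'le : j' ≤ j + 1 := Nat.find_le ⟨((0 : ℕ), d (j + 1)), hidx (j + 1),
      ⟨by calc (0:ℕ) = d 0 := hd0.symm
          _ < d (j + 1 + 1) := hdmono (show 0 < j + 1 + 1 by omega),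
        hdmono (show j + 1 < j + 1 + 1 by omega)⟩⟩
    have hempty : K k ∩ sq (d j') = ∅ := by
      rcases Nat.eq_zero_or_pos j' with h | h
      · rw [h, hd0]
        ext p; simp [hsq]
      · by_contra hne
        have hne' : (K k ∩ sq (d (j' - 1 + 1))).Nonempty := by
          rw [Nat.sub_add_cancel h]
          exact nonempty_iff_ne_empty.mpr hne
        exact Nat.find_min hkex (by omega) hne'
    have hsub : K k ⊆ sq (d (j' + 2)) := by
      have h := hPd (j' + 1) k hj'spec
      convert h using 3
    -- j + 1 ≤ j' + 1, i.e. j ≤ j'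
    have hjj' : j ≤ j' := by
      by_contra hc
      have hle : d (j' + 2) ≤ d (j + 1) := hdmono.monotone (show j' + 2 ≤ j + 1 by omega)
      have h1 : ((0 : ℕ), d (j + 1)) ∈ sq (d (j' + 2)) := hsub (hidx (j + 1))
      have h2 : d (j + 1) < d (j' + 2) := h1.2
      omega
    have hbX : b ∈ X := hpA.1
    have hab : a < b := hpA.2
    have hbu : b < d (j + 3) := by
      have h1 : (a, b) ∈ sq (d (j' + 2)) := hsub hpK
      have h2 : b < d (j' + 2) := h1.2
      exact lt_of_lt_of_le h2 (hdmono.monotone (show j' + 2 ≤ j + 3 by omega))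
    have hbl : d j ≤ b := by
      have hnot : (a, b) ∉ sq (d j') := by
        intro hmem
        have : (a, b) ∈ K k ∩ sq (d j') := ⟨hpK, hmem⟩
        rw [hempty] at this
        exact this
      have : ¬ (a < d j' ∧ b < d j') := hnot
      have hblow : d j' ≤ b := by
        by_contra hb
        exact this ⟨by omega, by omega⟩
      exact le_trans (hdmono.monotone hjj') hblow
    exact ⟨b, hbX, hbl, hbu⟩
  refine ⟨j1, fun r hr => ?_⟩
  obtain ⟨b, hbX, hb1, hb2⟩ := claim (3 * r) (by omega)
  exact ⟨b, hbX, hb1, hb2⟩
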